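/- arXiv:2004.07243 — 2 statements merged into one kernel-verified Lean document; each statement's English description precedes it below -/
import Mathlib

section
/- Let 1 ≤ q_l ≤ q_r ≤ N, and let H be a finite group of Hermitian, pairwise commuting Pauli strings on N qubits with −I ∉ H, such that every element of H acts as the identity on every site outside the interval [q_l, q_r]. Write |H| = 2^m. Then there exist m elements s_1, …, s_m generating H such that at most two of the s_j act nontrivially on the site q_l, and at most two of the s_j act nontrivially on the site q_r. -/
open scoped Classical
open scoped Matrix
noncomputable section
namespace QStab

/-- The space of operators (matrices) on a chain of qubits indexed by `ι`. -/
abbrev Op (ι : Type*) [Fintype ι] [DecidableEq ι] : Type _ :=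
  Matrix (ι → Fin 2) (ι → Fin 2) ℂ

variable {ι : Type*} [Fintype ι] [DecidableEq ι]

/-- The Pauli `X` operator at site `i`. -/
def PX (i : ι) : Op ι :=
  Matrix.of fun f g => if f = Function.update g i (g i + 1) then 1 else 0

/-- The Pauli `Z` operator at site `i`. -/
def PZ (i : ι) : Op ι :=
  Matrix.of fun f g => if f = g then ((-1 : ℂ)) ^ ((f i : ℕ)) else 0

/-- The (ordered) product `∏ i, (X i)^(a i)`. -/
def XProd (a : ι → Fin 2) : Op ι :=
  (Finset.univ.toList.map fun i => PX i ^ ((a i : ℕ))).prod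

/-- The (ordered) product `∏ i, (Z i)^(b i)`. -/
def ZProd (b : ι → Fin 2) : Op ι :=
  (Finset.univ.toList.map fun i => PZ i ^ ((b i : ℕ))).prod

/-- `c` is one of the allowed phases `1, −1, i, −i` of a Pauli string. -/
def IsPhase (c : ℂ) : Prop := c = 1 ∨ c = -1 ∨ c = Complex.I ∨ c = -Complex.I

/-- `M` is a Pauli string: `M = c • (∏ i, (X i)^(a i)) * (∏ i, (Z i)^(b i))`. -/
def IsPauli (M : Op ι) : Prop :=
  ∃ (c : ℂ) (a b : ι → Fin 2), IsPhase c ∧ M = c • (XProd a * ZProd b)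

/-- `M` is a Pauli string acting as the identity on every site outside `A`. -/
def IsPauliSupportedOn (A : Finset ι) (M : Op ι) : Prop :=
  ∃ (c : ℂ) (a b : ι → Fin 2), IsPhase c ∧ (∀ i, i ∉ A → a i = 0 ∧ b i = 0) ∧
    M = c • (XProd a * ZProd b)

/-- `M` is a Pauli string acting trivially (as the identity) at the site `i`. -/
def ActsTriviallyAt (i : ι) (M : Op ι) : Prop :=
  ∃ (c : ℂ) (a b : ι → Fin 2), IsPhase c ∧ a i = 0 ∧ b i = 0 ∧
    M = c • (XProd a * ZProd b)

/-- The function on all of `ι` agreeing with `f` on `A` and with `h` on `Aᶜ`. -/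
def combine (A : Finset ι) (f : ↥A → Fin 2) (h : ↥(Aᶜ) → Fin 2) : ι → Fin 2 :=
  fun i => if hi : i ∈ A then f ⟨i, hi⟩ else h ⟨i, Finset.mem_compl.mpr hi⟩

/-- The partial trace over the qubits outside `A` (the reduced density matrix on `A`). -/
def ptrace (A : Finset ι) (ρ : Op ι) : Matrix (↥A → Fin 2) (↥A → Fin 2) ℂ :=
  Matrix.of fun f g => ∑ h : ↥(Aᶜ) → Fin 2, ρ (combine A f h) (combine A g h)

/-- The rank-one projector `|ψ⟩⟨ψ|`. -/
def outer (ψ : (ι → Fin 2) → ℂ) : Op ι :=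
  Matrix.of fun f g => ψ f * star (ψ g)

/-- `ψ` is a unit vector. -/
def IsUnitVec (ψ : (ι → Fin 2) → ℂ) : Prop :=
  ∑ f, Complex.normSq (ψ f) = 1

/-- The von Neumann entropy `−Tr(ρ log ρ)` of a Hermitian matrix, computed through its
eigenvalues (with the convention `0 log 0 = 0`, and junk value `0` on non-Hermitian input). -/
def vnEntropy {n : Type*} [Fintype n] [DecidableEq n] (ρ : Matrix n n ℂ) : ℝ :=
  if h : ρ.IsHermitian then -∑ i, (h.eigenvalues i * Real.log (h.eigenvalues i)) else 0

/-- The von Neumann entanglement entropy of `ψ` in the region `A`: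
`S_A(ψ) = −Tr(ρ_A log ρ_A)` where `ρ_A` is the reduced density matrix of `|ψ⟩⟨ψ|`. -/
def entEntropy (A : Finset ι) (ψ : (ι → Fin 2) → ℂ) : ℝ :=
  vnEntropy (ptrace A (outer ψ))

/-- The product of the `s i` over the subset `T` (in increasing order of indices). -/
def subProd {N : ℕ} (s : Fin N → Op ι) (T : Finset (Fin N)) : Op ι :=
  ((Finset.sort T (· ≤ ·)).map s).prod

/-- `{s 0, …, s (N-1)}` is an independent set of `N` Hermitian pairwise commuting Pauli
strings: products over distinct subsets are pairwise distinct and no nonempty product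
equals `±I`. -/
def IndepStabs {N : ℕ} (s : Fin N → Op ι) : Prop :=
  (∀ i, IsPauli (s i)) ∧ (∀ i, (s i).IsHermitian) ∧
  (∀ i j, Commute (s i) (s j)) ∧
  Function.Injective (subProd s) ∧
  (∀ T : Finset (Fin N), T.Nonempty → subProd s T ≠ 1 ∧ subProd s T ≠ -1)

/-- The 1-based label of the site `i : Fin N`, so that the qubits are labeled `1, …, N`. -/
def lbl {N : ℕ} (i : Fin N) : ℕ := (i : ℕ) + 1

/-- The single-qubit operator `Z p` at the site with label `p` (1-based). -/
def ZSingle (N : ℕ) (p : ℕ) : Op (Fin N) :=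
  ZProd fun i => if lbl i = p then 1 else 0

/-- The string of `Z`'s at the labels `p, p+2, …, q` (sites of the parity of `p` in `[p,q]`). -/
def ZStr (N : ℕ) (p q : ℕ) : Op (Fin N) :=
  ZProd fun i => if p ≤ lbl i ∧ lbl i ≤ q ∧ lbl i % 2 = p % 2 then 1 else 0

/-- The string operator `g_{p,q} = X p * (∏_{k=0}^{(q−p)/2−1} Z (p+2k+1)) * X q`
for labels `p < q` of the same parity.  In particular the cluster stabilizer
`g i = X (i−1) * Z i * X (i+1)` is `GStr N (i-1) (i+1)`. -/
def GStr (N : ℕ) (p q : ℕ) : Op (Fin N) :=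
  (XProd fun i => if lbl i = p ∨ lbl i = q then 1 else 0) *
    ZProd fun i => if p < lbl i ∧ lbl i < q ∧ ¬(lbl i % 2 = p % 2) then 1 else 0

/-- `G1 = ∏_{i even} Z i` (even labels). -/
def Gsym1 (N : ℕ) : Op (Fin N) := ZProd fun i => if lbl i % 2 = 0 then 1 else 0

/-- `G2 = ∏_{i odd} Z i` (odd labels). -/
def Gsym2 (N : ℕ) : Op (Fin N) := ZProd fun i => if lbl i % 2 = 1 then 1 else 0

/-- The measurement channel `𝓔_S(ρ) = Π₊ ρ Π₊ + Π₋ ρ Π₋` with `Π± = (I ± S)/2`. -/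
def measChannel (S ρ : Op ι) : Op ι :=
  ((2 : ℂ)⁻¹ • (1 + S)) * ρ * ((2 : ℂ)⁻¹ • (1 + S)) +
    ((2 : ℂ)⁻¹ • (1 - S)) * ρ * ((2 : ℂ)⁻¹ • (1 - S))

/-- Measurement-update map on stabilizer groups: if the measured Pauli `M` commutes with
every element of `G` the group is unchanged; otherwise the new group is generated by the
centralizer `C_G(M)` together with `ε • M` (where `ε` is the measurement outcome sign). -/
def Meas (G : Submonoid (Op ι)) (M : Op ι) (ε : ℂ) : Submonoid (Op ι) :=
  if ∀ g ∈ G, M * g = g * M then G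
  else Submonoid.closure ({g | g ∈ G ∧ M * g = g * M} ∪ {ε • M})

/-- The isolated-SPT stabilizer set `𝒮(A)`: the string operators `g_{q_i, q_{i+1}}` between
consecutive elements of `A`, together with the total `Z`-product `∏_{p ∈ A} Z p`. -/
def SPTstabs (N : ℕ) (A : Finset ℕ) : Set (Op (Fin N)) :=
  {m | (∃ p ∈ A, ∃ q ∈ A, p < q ∧ (∀ r ∈ A, ¬(p < r ∧ r < q)) ∧ m = GStr N p q) ∨
    m = ZProd fun i => if lbl i ∈ A then 1 else 0}

/-- The block of the partition `P` containing `x`. -/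
def blockOf (P : Finset (Finset ℕ)) (x : ℕ) : Finset ℕ :=
  P.sup fun A => if x ∈ A then A else ∅

/-- Partition update for the move “measure `Z i`”: `i` is split off into its own block. -/
def updZ (P : Finset (Finset ℕ)) (i : ℕ) : Finset (Finset ℕ) :=
  insert {i} ((P.image fun A => A.erase i).erase ∅)

/-- Partition update for the move “measure `g i`”: the blocks of `i−1` and `i+1` merge. -/
def updG (P : Finset (Finset ℕ)) (i : ℕ) : Finset (Finset ℕ) :=
  insert (blockOf P (i - 1) ∪ blockOf P (i + 1))
    ((P.erase (blockOf P (i - 1))).erase (blockOf P (i + 1)))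

/-- The partition of `{1, …, N}` into singletons. -/
def startPart (N : ℕ) : Finset (Finset ℕ) := (Finset.Icc 1 N).image fun i => {i}

/-- The matrix `M`, supported on `A`, viewed as an operator on the qubits in `A` only. -/
def restrictOp (A : Finset ι) (M : Op ι) : Matrix (↥A → Fin 2) (↥A → Fin 2) ℂ :=
  Matrix.of fun f g =>
    M (fun i => if hi : i ∈ A then f ⟨i, hi⟩ else 0)
      (fun i => if hi : i ∈ A then g ⟨i, hi⟩ else 0)


section AuxPauli

-- Fin 2 arithmetic helpers
set_option linter.unusedSectionVars false

lemma fin2_add_add (x y : Fin 2) : x + y + y = x := by revert x y; decide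

lemma fin2_add_self (x : Fin 2) : x + x = 0 := by revert x; decide
lemma fin2_cases (x : Fin 2) : x = 0 ∨ x = 1 := by omega
lemma fin2_iff (x y z d : Fin 2) : x + d = y + z ↔ x = y + (z + d) := by revert x y z d; decide

lemma update_eq_add (g : ι → Fin 2) (i : ι) :
    Function.update g i (g i + 1) = fun j => g j + if j = i then 1 else 0 := by
  funext j
  by_cases h : j = i
  · subst h; simp
  · simp [Function.update_apply, h]

lemma PX_mul_apply (i : ι) (M : Op ι) (f g : ι → Fin 2) :
    (PX i * M) f g = M (fun j => f j + if j = i then 1 else 0) g := by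
  rw [Matrix.mul_apply]
  have key : ∀ h : ι → Fin 2,
      (f = Function.update h i (h i + 1)) ↔ h = fun j => f j + if j = i then 1 else 0 := by
    intro h
    rw [update_eq_add]
    constructor
    · intro hf; funext j
      have := congrFun hf j
      rw [this, fin2_add_add]
    · intro hh; subst hh; funext j; simp [fin2_add_add]
  have hterm : ∀ h : ι → Fin 2, PX i f h * M h g =
      (if h = (fun j => f j + if j = i then 1 else 0) then M h g else 0) := by
    intro h
    simp only [PX, Matrix.of_apply, key h, ite_mul, one_mul, zero_mul]
  rw [Finset.sum_congr rfl (fun h _ => hterm h)]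
  simp

lemma XProd_list (a : ι → Fin 2) : ∀ (l : List ι), l.Nodup →
    (l.map fun i => PX i ^ ((a i : ℕ))).prod =
      Matrix.of fun f g => if f = fun j => g j + (if j ∈ l then a j else 0) then (1:ℂ) else 0 := by
  intro l
  induction l with
  | nil =>
    intro _
    ext f g
    simp only [List.map_nil, List.prod_nil, Matrix.of_apply, List.not_mem_nil, if_false]
    have h0 : (fun j => g j + (0:Fin 2)) = g := by funext j; simp
    rw [h0, Matrix.one_apply]
  | cons i l ih =>
    intro hnd
    have hni : i ∉ l := (List.nodup_cons.mp hnd).1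
    have hnd' : l.Nodup := (List.nodup_cons.mp hnd).2
    rw [List.map_cons, List.prod_cons, ih hnd']
    rcases fin2_cases (a i) with h | h
    · have h0 : ((a i : ℕ)) = 0 := by rw [h]; rfl
      rw [h0, pow_zero, one_mul]
      ext f g
      simp only [Matrix.of_apply]
      congr 1
      have : ∀ j, (if j ∈ i :: l then a j else 0) = (if j ∈ l then a j else 0) := by
        intro j
        by_cases hji : j = i
        · subst hji; simp [hni, h]
        · simp [List.mem_cons, hji]
      simp only [this]
    · have h1 : ((a i : ℕ)) = 1 := by rw [h]; rfl
      rw [h1, pow_one]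
      ext f g
      rw [PX_mul_apply]
      simp only [Matrix.of_apply]
      have hχ : ∀ j, (if j ∈ i :: l then a j else 0)
          = (if j ∈ l then a j else 0) + (if j = i then (1:Fin 2) else 0) := by
        intro j
        by_cases hji : j = i
        · subst hji; simp [hni, h]
        · simp [List.mem_cons, hji]
      have hiff : ((fun j => f j + if j = i then 1 else 0)
            = fun j => g j + (if j ∈ l then a j else 0))
          ↔ (f = fun j => g j + (if j ∈ i :: l then a j else 0)) := by
        rw [funext_iff, funext_iff]
        apply forall_congr'
        intro j
        rw [hχ j]
        exact fin2_iff (f j) (g j) _ _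
      rw [if_congr hiff rfl rfl]

lemma XProd_apply (a : ι → Fin 2) (f g : ι → Fin 2) :
    XProd a f g = if f = fun j => g j + a j then (1:ℂ) else 0 := by
  rw [XProd, XProd_list a Finset.univ.toList Finset.univ.nodup_toList]
  simp [Finset.mem_toList]

def sgn (b g : ι → Fin 2) : ℂ := ∏ i, (-1:ℂ) ^ ((b i : ℕ) * (g i : ℕ))

lemma ZProd_eq (b : ι → Fin 2) : ZProd b = Matrix.diagonal (fun g => sgn b g) := by
  have hPZ : ∀ i : ι, PZ i = Matrix.diagonal (fun g : ι → Fin 2 => (-1:ℂ) ^ ((g i : ℕ))) := by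
    intro i
    rfl
  have key : ∀ l : List ι, ((l.map fun i => PZ i ^ ((b i : ℕ))).prod : Op ι)
      = Matrix.diagonal (fun g => (l.map fun i => (-1:ℂ) ^ ((b i : ℕ) * (g i : ℕ))).prod) := by
    intro l
    induction l with
    | nil => simp [Matrix.diagonal_one]
    | cons i l ih =>
      rw [List.map_cons, List.prod_cons, ih, hPZ i, Matrix.diagonal_pow,
        Matrix.diagonal_mul_diagonal]
      refine congrArg Matrix.diagonal (funext fun g => ?_)
      rw [List.map_cons, List.prod_cons, Pi.pow_apply, ← pow_mul, mul_comm ((g i : ℕ))]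
  rw [ZProd, key]
  exact congrArg Matrix.diagonal (funext fun g => Finset.prod_map_toList _ _)

lemma pauli_apply (c : ℂ) (a b : ι → Fin 2) (f g : ι → Fin 2) :
    (c • (XProd a * ZProd b)) f g
      = if f = fun j => g j + a j then c * sgn b g else 0 := by
  rw [Matrix.smul_apply, ZProd_eq, Matrix.mul_diagonal, XProd_apply]
  split <;> simp [mul_comm]

lemma sgn_zero_right (b : ι → Fin 2) : sgn b (fun _ => 0) = 1 :=
  Finset.prod_eq_one fun i _ => by norm_num

lemma sgn_zero_left (g : ι → Fin 2) : sgn (fun _ => 0) g = 1 :=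
  Finset.prod_eq_one fun i _ => by norm_num

lemma sgn_delta (b : ι → Fin 2) (i : ι) :
    sgn b (fun j => if j = i then 1 else 0) = (-1:ℂ)^((b i : ℕ)) := by
  unfold sgn
  rw [Finset.prod_eq_single i]
  · simp
  · intro j _ hj; simp [hj]
  · intro h; exact absurd (Finset.mem_univ i) h

lemma sgn_pm (b g : ι → Fin 2) : sgn b g = 1 ∨ sgn b g = -1 := by
  unfold sgn
  apply Finset.prod_induction _ (fun x : ℂ => x = 1 ∨ x = -1)
  · rintro x y (rfl|rfl) (rfl|rfl) <;> norm_num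
  · left; rfl
  · intro x _
    rcases Nat.even_or_odd ((b x : ℕ) * (g x : ℕ)) with h | h
    · left; exact h.neg_one_pow
    · right; exact h.neg_one_pow

lemma fin2_swap (x y z : Fin 2) : x = y + z ↔ y = x + z := by revert x y z; decide

lemma fin2_iff2 (x y z w : Fin 2) : x + z = y + w ↔ x = y + (z + w) := by
  revert x y z w; decide

lemma fin2_pow_inj (x y : Fin 2) (h : ((-1:ℂ))^((x:ℕ)) = (-1)^((y:ℕ))) : x = y := by
  rcases fin2_cases x with hx | hx <;> rcases fin2_cases y with hy | hy <;>
    subst hx <;> subst hy <;> first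
    | rfl
    | (exfalso; norm_num at h)

lemma pauli_unique {c c' : ℂ} (a b a' b' : ι → Fin 2) (hc : c ≠ 0)
    (h : c • (XProd a * ZProd b) = c' • (XProd a' * ZProd b')) :
    c = c' ∧ a = a' ∧ b = b' := by
  have happ : ∀ f g : ι → Fin 2,
      (c • (XProd a * ZProd b)) f g = (c' • (XProd a' * ZProd b')) f g :=
    fun f g => by rw [h]
  have h1 := happ (fun j => (fun _ : ι => (0:Fin 2)) j + a j) (fun _ => 0)
  rw [pauli_apply, pauli_apply, if_pos rfl, sgn_zero_right, mul_one] at h1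
  have hcond : ((fun j => (fun _ : ι => (0:Fin 2)) j + a j)
      = fun j => (fun _ : ι => (0:Fin 2)) j + a' j) := by
    by_contra hcc
    rw [if_neg hcc] at h1
    exact hc h1
  rw [if_pos hcond, sgn_zero_right, mul_one] at h1
  have ha : a = a' := by
    funext j
    have h2 := congrFun hcond j
    simpa using h2
  refine ⟨h1, ha, ?_⟩
  funext i
  have h2 := happ (fun j => (fun k => if k = i then (1:Fin 2) else 0) j + a j)
    (fun k => if k = i then 1 else 0)
  rw [ha] at h2
  rw [pauli_apply, pauli_apply, if_pos rfl, if_pos rfl, sgn_delta, sgn_delta, ← h1] at h2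
  exact fin2_pow_inj _ _ (mul_left_cancel₀ hc h2)

lemma sgn_factor (u v x y : Fin 2) :
    (-1:ℂ)^((u:ℕ) * (((x + y) : Fin 2):ℕ)) * (-1)^((v:ℕ)*((x:ℕ)))
      = (-1)^((u:ℕ)*((y:ℕ))) * (-1)^((((u+v) : Fin 2):ℕ)*((x:ℕ))) := by
  have hpar : ∀ s t : ℕ, s % 2 = t % 2 → ((-1:ℂ))^s = (-1)^t := by
    intro s t hst
    rw [← Nat.div_add_mod s 2, ← Nat.div_add_mod t 2, pow_add, pow_add, pow_mul, pow_mul]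
    norm_num [hst]
  rw [← pow_add, ← pow_add]
  apply hpar
  revert u v x y; decide

lemma sgn_mul_identity (b b' g a' : ι → Fin 2) :
    sgn b (fun j => g j + a' j) * sgn b' g = sgn b a' * sgn (fun j => b j + b' j) g := by
  unfold sgn
  rw [← Finset.prod_mul_distrib, ← Finset.prod_mul_distrib]
  exact Finset.prod_congr rfl fun i _ => sgn_factor (b i) (b' i) (g i) (a' i)

lemma pauli_mul (c c' : ℂ) (a b a' b' : ι → Fin 2) :
    (c • (XProd a * ZProd b)) * (c' • (XProd a' * ZProd b')) =
      ((c * c') * sgn b a') • (XProd (fun j => a j + a' j) * ZProd (fun j => b j + b' j)) := by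
  ext f g
  rw [Matrix.mul_apply]
  have hterm : ∀ h : ι → Fin 2,
      (c • (XProd a * ZProd b)) f h * (c' • (XProd a' * ZProd b')) h g
      = if h = (fun j => f j + a j) then
          (c * sgn b h) * ((c' • (XProd a' * ZProd b')) h g) else 0 := by
    intro h
    rw [pauli_apply]
    have hsw : (f = fun j => h j + a j) ↔ (h = fun j => f j + a j) := by
      rw [funext_iff, funext_iff]
      exact forall_congr' fun j => fin2_swap _ _ _
    rw [if_congr hsw rfl rfl]
    split
    · rfl
    · exact zero_mul _
  rw [Finset.sum_congr rfl (fun h _ => hterm h)]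
  rw [Finset.sum_ite_eq' Finset.univ (fun j => f j + a j)
    (fun h => (c * sgn b h) * ((c' • (XProd a' * ZProd b')) h g))]
  rw [if_pos (Finset.mem_univ _)]
  rw [pauli_apply, pauli_apply]
  have hcond : ((fun j => f j + a j) = fun j => g j + a' j)
      ↔ (f = fun j => g j + (a j + a' j)) := by
    rw [funext_iff, funext_iff]
    exact forall_congr' fun j => fin2_iff2 _ _ _ _
  rw [mul_ite, mul_zero, if_congr hcond rfl rfl]
  split
  · next hf =>
    have hF : ((fun j => f j + a j) = fun j => g j + a' j) := hcond.mpr hf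
    rw [hF]
    calc c * sgn b (fun j => g j + a' j) * (c' * sgn b' g)
        = (c * c') * (sgn b (fun j => g j + a' j) * sgn b' g) := by ring
      _ = (c * c') * (sgn b a' * sgn (fun j => b j + b' j) g) := by
          rw [sgn_mul_identity]
      _ = c * c' * sgn b a' * sgn (fun j => b j + b' j) g := by ring
  · rfl

lemma XZ_zero : (XProd (fun _ : ι => (0:Fin 2)) * ZProd (fun _ => 0)) = (1 : Op ι) := by
  ext f g
  have h := pauli_apply (1:ℂ) (fun _ : ι => 0) (fun _ => 0) f g
  rw [one_smul] at h
  have hg : (fun j => g j + (0:Fin 2)) = g := funext fun j => add_zero _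
  rw [h, Matrix.one_apply, sgn_zero_left, hg, one_mul]

lemma smul_one_inj {r r' : ℂ} (h : r • (1 : Op ι) = r' • 1) : r = r' := by
  have h2 := congrFun (congrFun h (fun _ => 0)) (fun _ => 0)
  simpa [Matrix.smul_apply, Matrix.one_apply] using h2

lemma isPhase_ne_zero {c : ℂ} (h : (c = 1 ∨ c = -1 ∨ c = Complex.I ∨ c = -Complex.I)) :
    c ≠ 0 := by
  rcases h with rfl | rfl | rfl | rfl <;> simp [Complex.I_ne_zero]

lemma isPhase_sq {c : ℂ} (h : (c = 1 ∨ c = -1 ∨ c = Complex.I ∨ c = -Complex.I)) :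
    c^2 = 1 ∨ c^2 = -1 := by
  rcases h with rfl | rfl | rfl | rfl <;> norm_num [Complex.I_sq]

lemma neg_one_smul_one' : ((-1 : ℂ) • (1 : Op ι)) = (-1 : Op ι) := by
  simp


end AuxPauli

end QStab

set_option maxHeartbeats 1000000

section
namespace QStabAux

open Module Submodule

variable {K E : Type*} [Field K] [AddCommGroup E] [Module K E] [FiniteDimensional K E]

lemma submodule_spanning (P : Submodule K E) :
    ∃ f : Fin (finrank K P) → E, (∀ j, f j ∈ P) ∧ Submodule.span K (Set.range f) = P := by
  let b := Module.finBasis K ↥P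
  refine ⟨fun j => (b j : E), fun j => (b j).2, ?_⟩
  have h1 : Set.range (fun j => ((b j : E))) = P.subtype '' Set.range b := by
    rw [← Set.range_comp]; rfl
  rw [h1, ← Submodule.map_span, b.span_eq, Submodule.map_subtype_top]

lemma exists_compl_rel (P Q : Submodule K E) (hPQ : P ≤ Q) :
    ∃ C : Submodule K E, C ≤ Q ∧ P ⊔ C = Q ∧
      finrank K P + finrank K C = finrank K Q := by
  obtain ⟨C', hC'⟩ := Submodule.exists_isCompl (P.comap Q.subtype)
  refine ⟨C'.map Q.subtype, Submodule.map_subtype_le _ _, ?_, ?_⟩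
  · have h1 := congrArg (Submodule.map Q.subtype) hC'.sup_eq_top
    rw [Submodule.map_sup, Submodule.map_comap_subtype, Submodule.map_subtype_top,
      inf_eq_right.mpr hPQ] at h1
    exact h1
  · have h2 := Submodule.finrank_add_eq_of_isCompl hC'
    rw [(Submodule.comapSubtypeEquivOfLe hPQ).finrank_eq,
      (Submodule.equivSubtypeMap Q C').finrank_eq] at h2
    exact h2

lemma exists_good_spanning (U W : Submodule K E) (m : ℕ) (hm : finrank K E = m)
    (hU : m ≤ finrank K U + 2) (hW : m ≤ finrank K W + 2) :
    ∃ v : Fin m → E, Submodule.span K (Set.range v) = ⊤ ∧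
      (Finset.univ.filter fun j => v j ∉ U).card ≤ 2 ∧
      (Finset.univ.filter fun j => v j ∉ W).card ≤ 2 := by
  classical
  obtain ⟨C1, hC1le, hC1sup, hC1rk⟩ := exists_compl_rel (U ⊓ W) U inf_le_left
  obtain ⟨C2, hC2le, hC2sup, hC2rk⟩ := exists_compl_rel (U ⊓ W) W inf_le_right
  obtain ⟨C3, hC3⟩ := Submodule.exists_isCompl (U ⊔ W)
  have hC3rk : finrank K ↥(U ⊔ W) + finrank K C3 = m := by
    rw [← hm, ← Submodule.finrank_add_eq_of_isCompl hC3]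
  have hsupinf := Submodule.finrank_sup_add_finrank_inf_eq U W
  set d0 := finrank K ↥(U ⊓ W) with hd0
  set na := finrank K ↥C1 with hna
  set nb := finrank K ↥C2 with hnb
  set nc := finrank K ↥C3 with hnc
  obtain ⟨f0, hf0mem, hf0span⟩ := submodule_spanning (U ⊓ W)
  obtain ⟨f1, hf1mem, hf1span⟩ := submodule_spanning C1
  obtain ⟨f2, hf2mem, hf2span⟩ := submodule_spanning C2
  obtain ⟨f3, hf3mem, hf3span⟩ := submodule_spanning C3
  have hsum : d0 + (na + (nb + nc)) = m := by omega
  let e : Fin m ≃ (Fin d0 ⊕ (Fin na ⊕ (Fin nb ⊕ Fin nc))) :=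
    (finCongr hsum.symm).trans <| finSumFinEquiv.symm.trans <|
      Equiv.sumCongr (Equiv.refl _) <| finSumFinEquiv.symm.trans <|
        Equiv.sumCongr (Equiv.refl _) finSumFinEquiv.symm
  let vv : (Fin d0 ⊕ (Fin na ⊕ (Fin nb ⊕ Fin nc))) → E := Sum.elim f0 (Sum.elim f1 (Sum.elim f2 f3))
  refine ⟨vv ∘ e, ?_, ?_, ?_⟩
  · have hr : Set.range (vv ∘ e) = Set.range vv := e.surjective.range_comp vv
    rw [hr]
    have h2 : Set.range vv = Set.range f0 ∪ (Set.range f1 ∪ (Set.range f2 ∪ Set.range f3)) := by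
      simp only [vv, Set.Sum.elim_range]
    rw [h2, Submodule.span_union, Submodule.span_union, Submodule.span_union,
      hf0span, hf1span, hf2span, hf3span]
    have b1 : C2 ≤ C2 ⊔ C3 := le_sup_left
    have b2 : C2 ⊔ C3 ≤ C1 ⊔ (C2 ⊔ C3) := le_sup_right
    have b3 : C1 ⊔ (C2 ⊔ C3) ≤ (U ⊓ W) ⊔ (C1 ⊔ (C2 ⊔ C3)) := le_sup_right
    have b4 : C1 ≤ C1 ⊔ (C2 ⊔ C3) := le_sup_left
    have b5 : C3 ≤ C2 ⊔ C3 := le_sup_right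
    have hW' : W ≤ (U ⊓ W) ⊔ (C1 ⊔ (C2 ⊔ C3)) := by
      conv_lhs => rw [← hC2sup]
      exact sup_le le_sup_left (b1.trans (b2.trans b3))
    have hU' : U ≤ (U ⊓ W) ⊔ (C1 ⊔ (C2 ⊔ C3)) := by
      conv_lhs => rw [← hC1sup]
      exact sup_le le_sup_left (b4.trans b3)
    apply le_antisymm le_top
    rw [← hC3.sup_eq_top]
    exact sup_le (sup_le hU' hW') ((b5.trans b2).trans b3)
  · -- at most nb + nc ≤ 2 are outside U
    have hbc : nb + nc ≤ 2 := by omega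
    have hinj : Function.Injective
        (fun x : Fin nb ⊕ Fin nc => (Sum.inr (Sum.inr x) : Fin d0 ⊕ (Fin na ⊕ (Fin nb ⊕ Fin nc)))) := by
      intro x y h
      simpa using h
    calc (Finset.univ.filter fun j => (vv ∘ e) j ∉ U).card
        ≤ (Finset.univ.map ⟨_, hinj⟩ : Finset (Fin d0 ⊕ (Fin na ⊕ (Fin nb ⊕ Fin nc)))).card := by
          apply Finset.card_le_card_of_injOn e
          · intro j hj
            rw [Finset.mem_coe, Finset.mem_filter] at hj
            rcases hx : e j with x0 | x1 | x2
            · exact absurd ((Submodule.mem_inf.mp (hf0mem x0)).1)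
                (by simpa [vv, Function.comp, hx] using hj.2)
            · exact absurd (hC1le (hf1mem x1)) (by simpa [vv, Function.comp, hx] using hj.2)
            · rw [Finset.mem_coe, Finset.mem_map]
              exact ⟨x2, Finset.mem_univ _, by simp [hx]⟩
          · exact fun x _ y _ h => e.injective h
      _ = nb + nc := by simp
      _ ≤ 2 := hbc
  · -- at most na + nc ≤ 2 are outside W
    have hac : na + nc ≤ 2 := by omega
    have hinj : Function.Injective (fun x : Fin na ⊕ Fin nc =>
        (Sum.elim (fun u => Sum.inr (Sum.inl u)) (fun w => Sum.inr (Sum.inr (Sum.inr w))) x : Fin d0 ⊕ (Fin na ⊕ (Fin nb ⊕ Fin nc)))) := by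
      intro x y h
      cases x <;> cases y <;> simp_all
    calc (Finset.univ.filter fun j => (vv ∘ e) j ∉ W).card
        ≤ (Finset.univ.map ⟨_, hinj⟩ : Finset (Fin d0 ⊕ (Fin na ⊕ (Fin nb ⊕ Fin nc)))).card := by
          apply Finset.card_le_card_of_injOn e
          · intro j hj
            rw [Finset.mem_coe, Finset.mem_filter] at hj
            rcases hx : e j with x0 | x1 | x2 | x3
            · exact absurd ((Submodule.mem_inf.mp (hf0mem x0)).2)
                (by simpa [vv, Function.comp, hx] using hj.2)
            · rw [Finset.mem_coe, Finset.mem_map]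
              exact ⟨Sum.inl x1, Finset.mem_univ _, by simp [hx]⟩
            · exact absurd (hC2le (hf2mem x2)) (by simpa [vv, Function.comp, hx] using hj.2)
            · rw [Finset.mem_coe, Finset.mem_map]
              exact ⟨Sum.inr x3, Finset.mem_univ _, by simp [hx]⟩
          · exact fun x _ y _ h => e.injective h
      _ = na + nc := by simp
      _ ≤ 2 := hac

end QStabAux
end

namespace QStab
variable {ι : Type*} [Fintype ι] [DecidableEq ι]

/-- Let `1 ≤ q_l ≤ q_r ≤ N` and let `H` be a finite group of Hermitian,
pairwise commuting Pauli strings with `−I ∉ H`, every element acting as the identity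
outside the interval `[q_l, q_r]`, and `|H| = 2^m`.  Then `H` admits `m` generators
`s 0, …, s (m-1)` such that at most two of them act nontrivially on the site `q_l`, and
at most two act nontrivially on the site `q_r`. -/
theorem clipped_gauge_generators_exist {N m : ℕ} (ql qr : ℕ)
    (hql : 1 ≤ ql) (hlr : ql ≤ qr) (hqr : qr ≤ N)
    (H : Finset (Op (Fin N))) (hone : (1 : Op (Fin N)) ∈ H)
    (hmul : ∀ g ∈ H, ∀ h ∈ H, g * h ∈ H)
    (hinv : ∀ g ∈ H, ∃ h ∈ H, g * h = 1)
    (hpauli : ∀ g ∈ H, IsPauli g)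
    (hherm : ∀ g ∈ H, Matrix.IsHermitian g)
    (hcomm : ∀ g ∈ H, ∀ h ∈ H, Commute g h)
    (hneg : (-1 : Op (Fin N)) ∉ H)
    (hsupp : ∀ g ∈ H,
      IsPauliSupportedOn (Finset.univ.filter fun i : Fin N => ql ≤ lbl i ∧ lbl i ≤ qr) g)
    (hcard : H.card = 2 ^ m) :
    ∃ s : Fin m → Op (Fin N),
      (∀ j, s j ∈ H) ∧
      (↑(Submonoid.closure (Set.range s)) : Set (Op (Fin N))) = ↑H ∧
      (Finset.univ.filter fun j : Fin m =>
        ∃ i : Fin N, lbl i = ql ∧ ¬ ActsTriviallyAt i (s j)).card ≤ 2 ∧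
      (Finset.univ.filter fun j : Fin m =>
        ∃ i : Fin N, lbl i = qr ∧ ¬ ActsTriviallyAt i (s j)).card ≤ 2 := by
  classical
  have hiqlN : ql - 1 < N := by omega
  have hiqrN : qr - 1 < N := by omega
  let iql : Fin N := ⟨ql - 1, hiqlN⟩
  let iqr : Fin N := ⟨qr - 1, hiqrN⟩
  have hlbl_ql : lbl iql = ql := by simp only [lbl, iql]; omega
  have hlbl_qr : lbl iqr = qr := by simp only [lbl, iqr]; omega
  -- choose Pauli representations of the elements of `H`
  have hrep : ∀ g : ↥H, ∃ c a b, IsPhase c ∧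
      (g : Op (Fin N)) = c • (XProd a * ZProd b) := fun g => hpauli g g.2
  choose cf af bf hph heq using hrep
  have hcne : ∀ g : ↥H, cf g ≠ 0 := fun g => isPhase_ne_zero (hph g)
  -- components of a product
  have hcomp : ∀ g h k : ↥H, (k : Op (Fin N)) = (g : Op (Fin N)) * h →
      (∀ j, af k j = af g j + af h j) ∧ (∀ j, bf k j = bf g j + bf h j) := by
    intro g h k hk
    have hmul' : (k : Op (Fin N)) = ((cf g * cf h) * sgn (bf g) (af h)) •
        (XProd (fun j => af g j + af h j) * ZProd (fun j => bf g j + bf h j)) := by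
      rw [hk, heq g, heq h, pauli_mul]
    have hu := pauli_unique _ _ _ _ (hcne k) ((heq k).symm.trans hmul')
    exact ⟨fun j => congrFun hu.2.1 j, fun j => congrFun hu.2.2 j⟩
  -- every element squares to the identity
  have hsq : ∀ g : ↥H, (g : Op (Fin N)) * g = 1 := by
    intro g
    have h1 : (g : Op (Fin N)) * g = ((cf g * cf g) * sgn (bf g) (af g)) •
        (XProd (fun j => af g j + af g j) * ZProd (fun j => bf g j + bf g j)) := by
      conv_lhs => rw [heq g]
      rw [pauli_mul]
    have hza : (fun j => af g j + af g j) = fun _ : Fin N => (0 : Fin 2) :=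
      funext fun j => fin2_add_self _
    have hzb : (fun j => bf g j + bf g j) = fun _ : Fin N => (0 : Fin 2) :=
      funext fun j => fin2_add_self _
    rw [hza, hzb, XZ_zero] at h1
    have hrpm : (cf g * cf g) * sgn (bf g) (af g) = 1 ∨
        (cf g * cf g) * sgn (bf g) (af g) = -1 := by
      have h2 := isPhase_sq (hph g)
      rw [sq] at h2
      rcases h2 with h2 | h2 <;> rcases sgn_pm (bf g) (af g) with h3 | h3 <;>
        rw [h2, h3] <;> norm_num
    rcases hrpm with h4 | h4
    · rw [h4, one_smul] at h1; exact h1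
    · exfalso
      rw [h4, neg_one_smul_one'] at h1
      exact hneg (h1 ▸ hmul _ g.2 _ g.2)
  -- elements with trivial Pauli components are the identity
  have hid : ∀ k : ↥H, (∀ j, af k j = 0) → (∀ j, bf k j = 0) →
      (k : Op (Fin N)) = 1 := by
    intro k hka hkb
    have h1 : (k : Op (Fin N)) = cf k • (1 : Op (Fin N)) := by
      rw [heq k]
      have ha : af k = fun _ : Fin N => (0:Fin 2) := funext hka
      have hb : bf k = fun _ : Fin N => (0:Fin 2) := funext hkb
      rw [ha, hb, XZ_zero]
    have h3 := hsq k
    rw [h1, smul_mul_smul_comm, one_mul] at h3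
    have hc2 : cf k * cf k = (1 : ℂ) := by
      have := smul_one_inj (ι := Fin N) (h3.trans (one_smul ℂ (1 : Op (Fin N))).symm)
      simpa using this
    have hcpm : cf k = 1 ∨ cf k = -1 := by
      have hfac : (cf k - 1) * (cf k + 1) = 0 := by linear_combination hc2
      rcases mul_eq_zero.mp hfac with h | h
      · left; linear_combination h
      · right; linear_combination h
    rcases hcpm with h | h
    · rw [h, one_smul] at h1; exact h1
    · exfalso
      rw [h, neg_one_smul_one'] at h1
      exact hneg (h1 ▸ k.2)
  -- injectivity of the component map on `H`
  have hinjH : ∀ g h : ↥H, af g = af h → bf g = bf h → g = h := by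
    intro g h ha hb
    have hk : (g : Op (Fin N)) * h ∈ H := hmul _ g.2 _ h.2
    have hc := hcomp g h ⟨_, hk⟩ rfl
    have hka : ∀ j, af (⟨_, hk⟩ : ↥H) j = 0 := fun j => by
      rw [hc.1 j, ha, fin2_add_self]
    have hkb : ∀ j, bf (⟨_, hk⟩ : ↥H) j = 0 := fun j => by
      rw [hc.2 j, hb, fin2_add_self]
    have hk1 : (g : Op (Fin N)) * h = 1 := hid ⟨_, hk⟩ hka hkb
    refine Subtype.ext ?_
    calc (g : Op (Fin N)) = g * (h * h) := by rw [hsq h, mul_one]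
      _ = ((g : Op (Fin N)) * h) * h := by rw [mul_assoc]
      _ = h := by rw [hk1, one_mul]
  -- the `ZMod 2` symplectic picture
  let φ : Fin 2 → ZMod 2 := fun x => ((x : ℕ) : ZMod 2)
  have φadd : ∀ x y : Fin 2, φ (x + y) = φ x + φ y := by decide
  have φ0 : ∀ x : Fin 2, φ x = 0 → x = 0 := by decide
  have φinj : ∀ x y : Fin 2, φ x = φ y → x = y := by decide
  let Φ : ↥H → (Fin N → ZMod 2) × (Fin N → ZMod 2) :=
    fun g => (fun i => φ (af g i), fun i => φ (bf g i))
  have Φadd : ∀ g h k : ↥H, (k : Op (Fin N)) = (g : Op (Fin N)) * h →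
      Φ k = Φ g + Φ h := by
    intro g h k hk
    obtain ⟨h1, h2⟩ := hcomp g h k hk
    refine Prod.ext ?_ ?_ <;> funext i
    · show φ (af k i) = φ (af g i) + φ (af h i)
      rw [h1 i, φadd]
    · show φ (bf k i) = φ (bf g i) + φ (bf h i)
      rw [h2 i, φadd]
  have ΦinjH : Function.Injective Φ := by
    intro g h hgh
    refine hinjH g h ?_ ?_
    · funext i
      exact φinj _ _ (congrFun (congrArg Prod.fst hgh) i)
    · funext i
      exact φinj _ _ (congrFun (congrArg Prod.snd hgh) i)
  have hΦ1 : Φ ⟨1, hone⟩ = 0 := by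
    have h0 := Φadd ⟨1, hone⟩ ⟨1, hone⟩ ⟨1, hone⟩ (by rw [one_mul])
    exact (left_eq_add.mp h0)
  -- the image of `H` is a `ZMod 2`-submodule
  let VS : Submodule (ZMod 2) ((Fin N → ZMod 2) × (Fin N → ZMod 2)) :=
    { carrier := Set.range Φ
      add_mem' := by
        rintro x y ⟨g, rfl⟩ ⟨h, rfl⟩
        exact ⟨⟨(g : Op (Fin N)) * h, hmul _ g.2 _ h.2⟩, Φadd g h _ rfl⟩
      zero_mem' := ⟨⟨1, hone⟩, hΦ1⟩
      smul_mem' := by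
        intro r x hx
        have hr : r = 0 ∨ r = 1 := by revert r; decide
        rcases hr with rfl | rfl
        · rw [zero_smul]; exact ⟨⟨1, hone⟩, hΦ1⟩
        · rw [one_smul]; exact hx }
  have hmemVS : ∀ g : ↥H, Φ g ∈ VS := fun g => ⟨g, rfl⟩
  -- cardinality and rank
  have hbij : Function.Bijective (fun g : ↥H => (⟨Φ g, hmemVS g⟩ : ↥VS)) := by
    constructor
    · intro g h hgh
      exact ΦinjH (congrArg Subtype.val hgh)
    · rintro ⟨x, g, rfl⟩
      exact ⟨g, rfl⟩
  have hcardVS : Fintype.card ↥VS = 2 ^ m := by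
    rw [← hcard, ← Fintype.card_coe H]
    exact (Fintype.card_of_bijective hbij).symm
  have hfr : Module.finrank (ZMod 2) ↥VS = m := by
    have h1 : Fintype.card ↥VS = Fintype.card (ZMod 2) ^ Module.finrank (ZMod 2) ↥VS :=
      Module.card_eq_pow_finrank
    rw [hcardVS, ZMod.card] at h1
    exact (Nat.pow_right_injective (le_refl 2) h1).symm
  -- the two clipping linear maps
  let ℓ : Fin N → (((Fin N → ZMod 2) × (Fin N → ZMod 2)) →ₗ[ZMod 2] (ZMod 2 × ZMod 2)) :=
    fun i => LinearMap.prod ((LinearMap.proj i).comp (LinearMap.fst _ _ _))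
      ((LinearMap.proj i).comp (LinearMap.snd _ _ _))
  let Lmap := (ℓ iql).comp VS.subtype
  let Rmap := (ℓ iqr).comp VS.subtype
  have hkerle : ∀ f : (↥VS →ₗ[ZMod 2] (ZMod 2 × ZMod 2)),
      m ≤ Module.finrank (ZMod 2) (LinearMap.ker f) + 2 := by
    intro f
    have h1 := LinearMap.finrank_range_add_finrank_ker f
    rw [hfr] at h1
    have h2 : Module.finrank (ZMod 2) (LinearMap.range f) ≤ 2 := by
      have := Submodule.finrank_le (LinearMap.range f)
      have h3 : Module.finrank (ZMod 2) (ZMod 2 × ZMod 2) = 2 := by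
        simp [Module.finrank_prod]
      omega
    omega
  obtain ⟨v, hspan, hcU, hcW⟩ := QStabAux.exists_good_spanning
    (LinearMap.ker Lmap) (LinearMap.ker Rmap) m hfr (hkerle Lmap) (hkerle Rmap)
  -- pick the generators
  have hvmem : ∀ j : Fin m, ∃ g : ↥H, Φ g = (v j : _) := fun j => (v j).2
  choose gs hgs using hvmem
  -- the submonoid given by `H`
  let HM : Submonoid (Op (Fin N)) :=
    { carrier := ↑H
      one_mem' := hone
      mul_mem' := fun ha hb => hmul _ ha _ hb }
  refine ⟨fun j => (gs j : Op (Fin N)), fun j => (gs j).2, ?_, ?_, ?_⟩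
  · -- the generators generate
    apply Set.Subset.antisymm
    · intro x hx
      have hle : Submonoid.closure (Set.range fun j => ((gs j : Op (Fin N)))) ≤ HM :=
        Submonoid.closure_le.mpr (by rintro y ⟨j, rfl⟩; exact (gs j).2)
      exact hle hx
    · intro g hg
      -- expand `Φ ⟨g, hg⟩` over the spanning family
      have hx : (⟨Φ ⟨g, hg⟩, hmemVS _⟩ : ↥VS) ∈ Submodule.span (ZMod 2) (Set.range v) := by
        rw [hspan]; trivial
      rw [Submodule.mem_span_range_iff_exists_fun] at hx
      obtain ⟨cc, hcc⟩ := hx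
      set T : Finset (Fin m) := Finset.univ.filter (fun j => cc j = 1) with hT
      have hsumT : (∑ j ∈ T, v j) = (⟨Φ ⟨g, hg⟩, hmemVS _⟩ : ↥VS) := by
        rw [← hcc, ← Finset.sum_filter_add_sum_filter_not Finset.univ (fun j => cc j = 1)
          (fun j => cc j • v j)]
        have e1 : (∑ j ∈ Finset.univ.filter (fun j => cc j = 1), cc j • v j)
            = ∑ j ∈ T, v j := by
          apply Finset.sum_congr rfl
          intro j hj
          rw [Finset.mem_filter] at hj
          rw [hj.2, one_smul]
        have e2 : (∑ j ∈ Finset.univ.filter (fun j => ¬ cc j = 1), cc j • v j) = 0 := by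
          apply Finset.sum_eq_zero
          intro j hj
          rw [Finset.mem_filter] at hj
          have : cc j = 0 := by
            have h01 : ∀ r : ZMod 2, r = 0 ∨ r = 1 := by decide
            rcases h01 (cc j) with h | h
            · exact h
            · exact absurd h hj.2
          rw [this, zero_smul]
        rw [e1, e2, add_zero]
      -- the commuting product over `T`
      have hcommT : ∀ (T' : Finset (Fin m)), ((T' : Set (Fin m)).Pairwise
          fun a b => Commute ((gs a : Op (Fin N))) ((gs b : Op (Fin N)))) :=
        fun T' a _ b _ _ => hcomm _ (gs a).2 _ (gs b).2
      have hprodmem : ∀ T' : Finset (Fin m),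
          T'.noncommProd (fun j => (gs j : Op (Fin N))) (hcommT T') ∈ H :=
        fun T' => Submonoid.noncommProd_mem HM T' _ (hcommT T') (fun j _ => (gs j).2)
      have hprodΦ : ∀ T' : Finset (Fin m),
          Φ ⟨T'.noncommProd (fun j => (gs j : Op (Fin N))) (hcommT T'), hprodmem T'⟩
            = ∑ j ∈ T', Φ (gs j) := by
        intro T'
        induction T' using Finset.induction_on with
        | empty =>
          have he : (⟨Finset.noncommProd ∅ (fun j => ((gs j : Op (Fin N))))
              (hcommT ∅), hprodmem ∅⟩ : ↥H) = ⟨1, hone⟩ :=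
            Subtype.ext (Finset.noncommProd_empty (fun j => ((gs j : Op (Fin N)))) (hcommT ∅))
          rw [he, hΦ1, Finset.sum_empty]
        | @insert j T' hjT ihT =>
          have hval : (insert j T').noncommProd (fun j => ((gs j : Op (Fin N))))
              (hcommT _) = (gs j : Op (Fin N)) *
                T'.noncommProd (fun j => ((gs j : Op (Fin N)))) (hcommT T') :=
            Finset.noncommProd_insert_of_notMem _ _ _ _ hjT
          have hstep := Φadd (gs j) ⟨_, hprodmem T'⟩ ⟨_, hprodmem (insert j T')⟩ hval
          rw [hstep, ihT, Finset.sum_insert hjT]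
      -- conclude that `g` is the product over `T`
      have hΦeq : Φ ⟨T.noncommProd (fun j => ((gs j : Op (Fin N)))) (hcommT T),
          hprodmem T⟩ = Φ ⟨g, hg⟩ := by
        rw [hprodΦ T]
        have hcoe := congrArg (Subtype.val) hsumT
        rw [Submodule.coe_sum] at hcoe
        have : (∑ j ∈ T, Φ (gs j)) = ∑ j ∈ T, (v j : (Fin N → ZMod 2) × (Fin N → ZMod 2)) := by
          apply Finset.sum_congr rfl
          intro j _
          rw [hgs j]
        rw [this, hcoe]
      have hgen := ΦinjH hΦeq
      have hgp : g = T.noncommProd (fun j => ((gs j : Op (Fin N)))) (hcommT T) :=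
        (congrArg Subtype.val hgen).symm
      rw [hgp]
      exact Submonoid.noncommProd_mem _ T _ (hcommT T)
        (fun j _ => Submonoid.subset_closure ⟨j, rfl⟩)
  · -- at most two generators act nontrivially at `ql`
    have hsub : (Finset.univ.filter fun j : Fin m =>
        ∃ i : Fin N, lbl i = ql ∧ ¬ ActsTriviallyAt i ((gs j : Op (Fin N)))) ⊆
        (Finset.univ.filter fun j : Fin m => v j ∉ LinearMap.ker Lmap) := by
      intro j hj
      rw [Finset.mem_filter] at hj ⊢
      refine ⟨Finset.mem_univ _, ?_⟩
      intro hker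
      obtain ⟨i, hi, hact⟩ := hj.2
      apply hact
      have hieq : i = iql := by
        apply Fin.ext
        have : (i : ℕ) + 1 = ql := hi
        simp only [iql]
        omega
      subst hieq
      have hker0 : Lmap (v j) = 0 := hker
      have hc1 : φ (af (gs j) iql) = 0 := by
        have := congrArg Prod.fst hker0
        rw [show (Lmap (v j)).1 = ((v j : _) : (Fin N → ZMod 2) × (Fin N → ZMod 2)).1 iql from rfl,
          ← hgs j] at this
        exact this
      have hc2 : φ (bf (gs j) iql) = 0 := by
        have := congrArg Prod.snd hker0
        rw [show (Lmap (v j)).2 = ((v j : _) : (Fin N → ZMod 2) × (Fin N → ZMod 2)).2 iql from rfl,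
          ← hgs j] at this
        exact this
      exact ⟨cf (gs j), af (gs j), bf (gs j), hph (gs j), φ0 _ hc1, φ0 _ hc2, heq (gs j)⟩
    calc (Finset.univ.filter fun j : Fin m =>
        ∃ i : Fin N, lbl i = ql ∧ ¬ ActsTriviallyAt i ((gs j : Op (Fin N)))).card
        ≤ (Finset.univ.filter fun j : Fin m => v j ∉ LinearMap.ker Lmap).card :=
          Finset.card_le_card hsub
      _ ≤ 2 := hcU
  · -- at most two generators act nontrivially at `qr`
    have hsub : (Finset.univ.filter fun j : Fin m =>
        ∃ i : Fin N, lbl i = qr ∧ ¬ ActsTriviallyAt i ((gs j : Op (Fin N)))) ⊆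
        (Finset.univ.filter fun j : Fin m => v j ∉ LinearMap.ker Rmap) := by
      intro j hj
      rw [Finset.mem_filter] at hj ⊢
      refine ⟨Finset.mem_univ _, ?_⟩
      intro hker
      obtain ⟨i, hi, hact⟩ := hj.2
      apply hact
      have hieq : i = iqr := by
        apply Fin.ext
        have : (i : ℕ) + 1 = qr := hi
        simp only [iqr]
        omega
      subst hieq
      have hker0 : Rmap (v j) = 0 := hker
      have hc1 : φ (af (gs j) iqr) = 0 := by
        have := congrArg Prod.fst hker0
        rw [show (Rmap (v j)).1 = ((v j : _) : (Fin N → ZMod 2) × (Fin N → ZMod 2)).1 iqr from rfl,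
          ← hgs j] at this
        exact this
      have hc2 : φ (bf (gs j) iqr) = 0 := by
        have := congrArg Prod.snd hker0
        rw [show (Rmap (v j)).2 = ((v j : _) : (Fin N → ZMod 2) × (Fin N → ZMod 2)).2 iqr from rfl,
          ← hgs j] at this
        exact this
      exact ⟨cf (gs j), af (gs j), bf (gs j), hph (gs j), φ0 _ hc1, φ0 _ hc2, heq (gs j)⟩
    calc (Finset.univ.filter fun j : Fin m =>
        ∃ i : Fin N, lbl i = qr ∧ ¬ ActsTriviallyAt i ((gs j : Op (Fin N)))).card
        ≤ (Finset.univ.filter fun j : Fin m => v j ∉ LinearMap.ker Rmap).card :=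
          Finset.card_le_card hsub
      _ ≤ 2 := hcW

end QStab
end
end

section
/- Let ψ be a unit vector on N qubits, let G be a group of Hermitian Pauli strings with g ψ = ψ for every g ∈ G, and let M be a Hermitian Pauli string that anticommutes with at least one element of G. Then ‖Π₊ ψ‖² = 1/2, where Π₊ = (I + M)/2, and the unit vector φ = √2 · Π₊ ψ satisfies M φ = φ and h φ = φ for every h ∈ C_G(M) = {g ∈ G : M g = g M}. -/
open scoped Classical
open scoped Matrix
noncomputable section
namespace QStab

variable {ι : Type*} [Fintype ι] [DecidableEq ι]

lemma fin2_add_one_add_one : ∀ x : Fin 2, x + 1 + 1 = x := by decide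

lemma upd_symm (i : ι) (f g : ι → Fin 2) :
    f = Function.update g i (g i + 1) → g = Function.update f i (f i + 1) := by
  rintro rfl
  rw [Function.update_self, Function.update_idem, fin2_add_one_add_one _,
    Function.update_eq_self]

lemma PX_mul_PX (i : ι) : PX i * PX i = (1 : Op ι) := by
  ext f g
  rw [Matrix.mul_apply, Finset.sum_eq_single (Function.update g i (g i + 1))]
  · simp only [PX, Matrix.of_apply, if_pos rfl, mul_one]
    rw [Function.update_self, Function.update_idem, fin2_add_one_add_one _,
      Function.update_eq_self]
    simp [Matrix.one_apply]
  · intro h _ hne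
    simp [PX, hne]
  · simp

lemma PX_herm (i : ι) : (PX i)ᴴ = PX i := by
  ext f g
  simp only [Matrix.conjTranspose_apply, PX, Matrix.of_apply]
  by_cases h : f = Function.update g i (g i + 1)
  · rw [if_pos h, if_pos (upd_symm i f g h), star_one]
  · rw [if_neg h, if_neg (fun hg => h (upd_symm i g f hg)), star_zero]

lemma PZ_mul_PZ (i : ι) : PZ i * PZ i = (1 : Op ι) := by
  ext f g
  simp only [PZ, Matrix.mul_apply, Matrix.of_apply, ite_mul, zero_mul,
    Finset.sum_ite_eq, Finset.mem_univ, if_true, Matrix.one_apply]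
  split
  · rename_i h; subst h
    rw [← pow_add, ← two_mul, pow_mul]
    norm_num
  · simp

lemma PZ_herm (i : ι) : (PZ i)ᴴ = PZ i := by
  ext f g
  simp only [Matrix.conjTranspose_apply, PZ, Matrix.of_apply]
  by_cases h : f = g
  · subst h; simp
  · rw [if_neg h, if_neg (fun hg : g = f => h hg.symm), star_zero]

lemma sq_one_pow {α : Type*} [Monoid α] {x : α} (h : x * x = 1) (n : ℕ) :
    x ^ n * x ^ n = 1 := by
  rw [← pow_add, ← two_mul, pow_mul, sq, h, one_pow]

lemma rev_prod_mul_prod {α : Type*} [Monoid α] :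
    ∀ (l : List α), (∀ x ∈ l, x * x = 1) → l.reverse.prod * l.prod = 1
  | [], _ => by simp
  | x :: t, h => by
    have ht := rev_prod_mul_prod t (fun y hy => h y (List.mem_cons_of_mem _ hy))
    simp only [List.reverse_cons, List.prod_append, List.prod_cons, List.prod_nil, mul_one]
    rw [mul_assoc, ← mul_assoc x x, h x List.mem_cons_self, one_mul, ht]

lemma XProd_conjT_mul (a : ι → Fin 2) : (XProd a)ᴴ * XProd a = 1 := by
  unfold XProd
  rw [Matrix.conjTranspose_list_prod, List.map_map]
  have he : (Matrix.conjTranspose ∘ fun i => PX i ^ ((a i : ℕ))) =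
      fun i => PX i ^ ((a i : ℕ)) := by
    funext i
    simp [Function.comp, Matrix.conjTranspose_pow, PX_herm]
  rw [he]
  refine rev_prod_mul_prod _ ?_
  intro x hx
  obtain ⟨i, _, rfl⟩ := List.mem_map.mp hx
  exact sq_one_pow (PX_mul_PX i) _

lemma ZProd_conjT_mul (b : ι → Fin 2) : (ZProd b)ᴴ * ZProd b = 1 := by
  unfold ZProd
  rw [Matrix.conjTranspose_list_prod, List.map_map]
  have he : (Matrix.conjTranspose ∘ fun i => PZ i ^ ((b i : ℕ))) =
      fun i => PZ i ^ ((b i : ℕ)) := by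
    funext i
    simp [Function.comp, Matrix.conjTranspose_pow, PZ_herm]
  rw [he]
  refine rev_prod_mul_prod _ ?_
  intro x hx
  obtain ⟨i, _, rfl⟩ := List.mem_map.mp hx
  exact sq_one_pow (PZ_mul_PZ i) _

lemma pauli_conjT_mul {M : Op ι} (hM : IsPauli M) : Mᴴ * M = 1 := by
  obtain ⟨c, a, b, hc, rfl⟩ := hM
  rw [Matrix.conjTranspose_smul, Matrix.conjTranspose_mul, Matrix.smul_mul,
    Matrix.mul_smul, smul_smul]
  have hcc : (starRingEnd ℂ) c * c = 1 := by
    rcases hc with rfl | rfl | rfl | rfl <;> simp [Complex.conj_I]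
  rw [mul_assoc ((ZProd b)ᴴ), ← mul_assoc ((XProd a)ᴴ), XProd_conjT_mul, one_mul,
    ZProd_conjT_mul]
  simp [hcc]

lemma pauli_herm_sq {M : Op ι} (hM : IsPauli M) (hh : M.IsHermitian) : M * M = 1 := by
  nth_rewrite 1 [← hh]
  exact pauli_conjT_mul hM

lemma dot_self_normSq {n : Type*} [Fintype n] (v : n → ℂ) :
    star v ⬝ᵥ v = ((∑ f, Complex.normSq (v f) : ℝ) : ℂ) := by
  simp only [dotProduct, Pi.star_apply, Complex.ofReal_sum]
  refine Finset.sum_congr rfl fun f _ => ?_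
  rw [Complex.star_def]
  exact Complex.normSq_eq_conj_mul_self.symm

/-- Let `ψ` be a unit vector stabilized by a group `G` of Hermitian Pauli
strings and let `M` be a Hermitian Pauli string anticommuting with at least one element of
`G`.  Then `‖Π₊ ψ‖² = 1/2` where `Π₊ = (I + M)/2`, and the unit vector `φ = √2 · Π₊ ψ`
satisfies `M φ = φ` and `h φ = φ` for every `h ∈ C_G(M)`. -/
theorem projective_measurement_outcome {N : ℕ}
    (ψ : (Fin N → Fin 2) → ℂ) (hψ : IsUnitVec ψ)
    (G : Finset (Op (Fin N))) (hone : (1 : Op (Fin N)) ∈ G)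
    (hmul : ∀ g ∈ G, ∀ h ∈ G, g * h ∈ G)
    (hpauli : ∀ g ∈ G, IsPauli g)
    (hherm : ∀ g ∈ G, Matrix.IsHermitian g)
    (hstab : ∀ g ∈ G, g *ᵥ ψ = ψ)
    (M : Op (Fin N)) (hM : IsPauli M) (hMherm : M.IsHermitian)
    (g₀ : Op (Fin N)) (hg₀ : g₀ ∈ G) (hanti : M * g₀ = -(g₀ * M)) :
    (∑ f, Complex.normSq ((((2 : ℂ)⁻¹ • (1 + M)) *ᵥ ψ) f)) = 1 / 2 ∧
    M *ᵥ ((Real.sqrt 2 : ℂ) • (((2 : ℂ)⁻¹ • (1 + M)) *ᵥ ψ))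
        = (Real.sqrt 2 : ℂ) • (((2 : ℂ)⁻¹ • (1 + M)) *ᵥ ψ) ∧
    ∀ h ∈ G, M * h = h * M →
      h *ᵥ ((Real.sqrt 2 : ℂ) • (((2 : ℂ)⁻¹ • (1 + M)) *ᵥ ψ))
        = (Real.sqrt 2 : ℂ) • (((2 : ℂ)⁻¹ • (1 + M)) *ᵥ ψ) := by
  have hM2 : M * M = 1 := pauli_herm_sq hM hMherm
  set P : Op (Fin N) := (2 : ℂ)⁻¹ • (1 + M) with hP
  have hPherm : Pᴴ = P := by
    rw [hP, Matrix.conjTranspose_smul, Matrix.conjTranspose_add, Matrix.conjTranspose_one,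
      hMherm]
    norm_num
  have h1M : (1 + M) * (1 + M) = (2 : ℂ) • (1 + M) := by
    rw [add_mul, one_mul, mul_add, mul_one, hM2, two_smul]
    abel
  have hPP : P * P = P := by
    rw [hP, Matrix.smul_mul, Matrix.mul_smul, h1M, smul_smul, smul_smul]
    norm_num
  have hMP : M * P = P := by
    rw [hP, Matrix.mul_smul, mul_add, mul_one, hM2, add_comm]
  have hv : M *ᵥ (P *ᵥ ψ) = P *ᵥ ψ := by
    rw [Matrix.mulVec_mulVec, hMP]
  have hg₀h : g₀ᴴ = g₀ := hherm g₀ hg₀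
  have hsψ : star ψ ᵥ* g₀ = star ψ := by
    rw [← hg₀h, ← Matrix.star_mulVec, hstab g₀ hg₀]
  have key : star ψ ⬝ᵥ (M *ᵥ ψ) = 0 := by
    have h1 : star ψ ⬝ᵥ (M *ᵥ ψ) = -(star ψ ⬝ᵥ (M *ᵥ ψ)) := by
      nth_rewrite 2 [← hstab g₀ hg₀]
      rw [Matrix.mulVec_mulVec, hanti, Matrix.neg_mulVec, dotProduct_neg,
        ← Matrix.mulVec_mulVec, Matrix.dotProduct_mulVec, hsψ]
    have h2 : (2 : ℂ) * (star ψ ⬝ᵥ (M *ᵥ ψ)) = 0 := by linear_combination h1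
    exact (mul_eq_zero.mp h2).resolve_left two_ne_zero
  have hsum1 : ∑ f, Complex.normSq (ψ f) = 1 := hψ
  have hψ1 : star ψ ⬝ᵥ ψ = 1 := by
    rw [dot_self_normSq, hsum1, Complex.ofReal_one]
  have hvv : star (P *ᵥ ψ) ⬝ᵥ (P *ᵥ ψ) = 1 / 2 := by
    rw [Matrix.star_mulVec, hPherm, ← Matrix.dotProduct_mulVec, Matrix.mulVec_mulVec, hPP,
      hP, Matrix.smul_mulVec, dotProduct_smul, Matrix.add_mulVec,
      Matrix.one_mulVec, dotProduct_add, hψ1, key]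
    norm_num
  refine ⟨?_, ?_, ?_⟩
  · have hc : ((∑ f, Complex.normSq ((P *ᵥ ψ) f) : ℝ) : ℂ) = ((1 / 2 : ℝ) : ℂ) := by
      rw [← dot_self_normSq, hvv]
      norm_num
    exact_mod_cast hc
  · rw [Matrix.mulVec_smul, hv]
  · intro h hG hcomm
    have hPcomm : h * P = P * h := by
      rw [hP, Matrix.mul_smul, Matrix.smul_mul, mul_add, add_mul, mul_one, one_mul, hcomm]
    rw [Matrix.mulVec_smul, Matrix.mulVec_mulVec, hPcomm, ← Matrix.mulVec_mulVec,
      hstab h hG]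

end QStab
end
end
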